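/- Indirect (spillover) intention-to-treat decomposition: under Assumptions 1 and 2, E[Y | Z_i=0, Z_j=1] − E[Y | Z_i=0, Z_j=0] = E[(Y(1,0)−Y(0,0)) · 1_{SC_i ∩ (GC_j ∪ NT_j)}] + E[(Y(1,1)−Y(0,0)) · 1_{SC_i ∩ (SC_j ∪ C_j)}] + E[(Y(1,1)−Y(0,1)) · 1_{SC_i ∩ AT_j}] + E[(Y(0,1)−Y(0,0)) · 1_{(C_i ∪ GC_i ∪ NT_i) ∩ (SC_j ∪ C_j)}] + E[(Y(1,1)−Y(1,0)) · 1_{AT_i ∩ (SC_j ∪ C_j)}], where 1_A denotes the indicator of the event A. -/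

import Mathlib

open MeasureTheory ProbabilityTheory

noncomputable def bInd (b : Bool) : ℝ := if b then 1 else 0

private lemma mul_ind' {Ω : Type*} (f : Ω → ℝ) (S : Set Ω) :
    (fun ω => f ω * S.indicator (fun _ => (1:ℝ)) ω) = S.indicator f := by
  funext ω; by_cases h : ω ∈ S <;> simp [h]

private lemma bool_types' (a b c d : Bool) (hab : a ≤ b) (hbc : b ≤ c) (hcd : c ≤ d) :
    (a = false ∧ b = false ∧ c = false ∧ d = false) ∨
    (a = false ∧ b = false ∧ c = false ∧ d = true) ∨
    (a = false ∧ b = false ∧ c = true ∧ d = true) ∨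
    (a = false ∧ b = true ∧ c = true ∧ d = true) ∨
    (a = true ∧ b = true ∧ c = true ∧ d = true) := by
  revert hab hbc hcd
  rcases a <;> rcases b <;> rcases c <;> rcases d <;> decide

private lemma ptwise0 (a b c d e f g h : Bool) (hab : a ≤ b) (hbc : b ≤ c) (hcd : c ≤ d)
    (hef : e ≤ f) (hfg : f ≤ g) (hgh : g ≤ h) (Y : Bool → Bool → ℝ) :
    Y b g - Y a e
      = (Y true false - Y false false) *
          (if (b = true ∧ a = false) ∧ ((h = true ∧ g = false) ∨ h = false) then 1 else 0)
      + (Y true true - Y false false) *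
          (if (b = true ∧ a = false) ∧ ((f = true ∧ e = false) ∨ (g = true ∧ f = false)) then 1 else 0)
      + (Y true true - Y false true) *
          (if (b = true ∧ a = false) ∧ e = true then 1 else 0)
      + (Y false true - Y false false) *
          (if ((c = true ∧ b = false) ∨ (d = true ∧ c = false) ∨ d = false) ∧
              ((f = true ∧ e = false) ∨ (g = true ∧ f = false)) then 1 else 0)
      + (Y true true - Y true false) *
          (if a = true ∧ ((f = true ∧ e = false) ∨ (g = true ∧ f = false)) then 1 else 0) := by
  rcases bool_types' a b c d hab hbc hcd with ⟨h1,h2,h3,h4⟩|⟨h1,h2,h3,h4⟩|⟨h1,h2,h3,h4⟩|⟨h1,h2,h3,h4⟩|⟨h1,h2,h3,h4⟩ <;>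
    rcases bool_types' e f g h hef hfg hgh with ⟨k1,k2,k3,k4⟩|⟨k1,k2,k3,k4⟩|⟨k1,k2,k3,k4⟩|⟨k1,k2,k3,k4⟩|⟨k1,k2,k3,k4⟩ <;>
    subst h1 h2 h3 h4 k1 k2 k3 k4 <;> norm_num

private lemma ptwise' {Ω : Type*} (Di Dj : Bool → Bool → Ω → Bool) (Y : Bool → Bool → Ω → ℝ)
    (ω : Ω)
    (hi1 : Di false false ω ≤ Di false true ω) (hi2 : Di false true ω ≤ Di true false ω)
    (hi3 : Di true false ω ≤ Di true true ω)
    (hj1 : Dj false false ω ≤ Dj false true ω) (hj2 : Dj false true ω ≤ Dj true false ω)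
    (hj3 : Dj true false ω ≤ Dj true true ω) :
    Y (Di false true ω) (Dj true false ω) ω - Y (Di false false ω) (Dj false false ω) ω
      = (Y true false ω - Y false false ω) * Set.indicator ({x | Di false true x = true ∧ Di false false x = false} ∩ ({x | Dj true true x = true ∧ Dj true false x = false} ∪ {x | Dj true true x = false})) (fun _ => (1:ℝ)) ω
      + ((Y true true ω - Y false false ω) * Set.indicator ({x | Di false true x = true ∧ Di false false x = false} ∩ ({x | Dj false true x = true ∧ Dj false false x = false} ∪ {x | Dj true false x = true ∧ Dj false true x = false})) (fun _ => (1:ℝ)) ω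
      + ((Y true true ω - Y false true ω) * Set.indicator ({x | Di false true x = true ∧ Di false false x = false} ∩ {x | Dj false false x = true}) (fun _ => (1:ℝ)) ω
      + ((Y false true ω - Y false false ω) * Set.indicator (({x | Di true false x = true ∧ Di false true x = false} ∪ {x | Di true true x = true ∧ Di true false x = false} ∪ {x | Di true true x = false}) ∩ ({x | Dj false true x = true ∧ Dj false false x = false} ∪ {x | Dj true false x = true ∧ Dj false true x = false})) (fun _ => (1:ℝ)) ω
      + (Y true true ω - Y true false ω) * Set.indicator ({x | Di false false x = true} ∩ ({x | Dj false true x = true ∧ Dj false false x = false} ∪ {x | Dj true false x = true ∧ Dj false true x = false})) (fun _ => (1:ℝ)) ω))) := by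
  rcases bool_types' (Di false false ω) (Di false true ω) (Di true false ω) (Di true true ω)
      hi1 hi2 hi3 with ⟨h1,h2,h3,h4⟩|⟨h1,h2,h3,h4⟩|⟨h1,h2,h3,h4⟩|⟨h1,h2,h3,h4⟩|⟨h1,h2,h3,h4⟩ <;>
    rcases bool_types' (Dj false false ω) (Dj false true ω) (Dj true false ω) (Dj true true ω)
      hj1 hj2 hj3 with ⟨k1,k2,k3,k4⟩|⟨k1,k2,k3,k4⟩|⟨k1,k2,k3,k4⟩|⟨k1,k2,k3,k4⟩|⟨k1,k2,k3,k4⟩ <;>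
    simp only [Set.indicator_apply, Set.mem_inter_iff, Set.mem_union, Set.mem_setOf_eq,
      h1, h2, h3, h4, k1, k2, k3, k4] <;>
    norm_num

private lemma key_cond'
    {Ω : Type*} [MeasurableSpace Ω] (P : Measure Ω) [IsProbabilityMeasure P]
    (Y : Bool → Bool → Ω → ℝ) (Di Dj : Bool → Bool → Ω → Bool)
    (Zi Zj : Ω → Bool)
    (hYmeas : ∀ d d', Measurable (Y d d'))
    (hYint : ∀ d d', Integrable (Y d d') P)
    (hDimeas : ∀ z z', Measurable (Di z z'))
    (hDjmeas : ∀ z z', Measurable (Dj z z'))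
    (hZi : Measurable Zi) (hZj : Measurable Zj)
    (hpos : ∀ z z', 0 < P ({x | Zi x = z} ∩ {x | Zj x = z'}))
    (hIV : IndepFun
      (fun ω => ((fun d d' => Y d d' ω),
                 (fun z z' => Di z z' ω),
                 (fun z z' => Dj z z' ω)))
      (fun ω => (Zi ω, Zj ω)) P)
    (z z' : Bool) :
    ∫ ω, (Y (Di (Zi ω) (Zj ω) ω) (Dj (Zj ω) (Zi ω) ω) ω)
        ∂(P[|({x | Zi x = z} ∩ {x | Zj x = z'})])
      = ∫ ω, Y (Di z z' ω) (Dj z' z ω) ω ∂P := by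
  set s : Set Ω := {x | Zi x = z} ∩ {x | Zj x = z'} with hs_def
  have hs : MeasurableSet s :=
    (hZi (measurableSet_singleton z)).inter (hZj (measurableSet_singleton z'))
  have hs0 : P s ≠ 0 := (hpos z z').ne'
  have hstop : P s ≠ ⊤ := measure_ne_top P s
  have hFeq : (fun ω => Y (Di z z' ω) (Dj z' z ω) ω)
      = fun ω => if Di z z' ω then (if Dj z' z ω then Y true true ω else Y true false ω)
          else (if Dj z' z ω then Y false true ω else Y false false ω) := by
    funext ω; cases Di z z' ω <;> cases Dj z' z ω <;> rfl
  have hFmeas : Measurable (fun ω => Y (Di z z' ω) (Dj z' z ω) ω) := by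
    rw [hFeq]
    refine Measurable.ite ((hDimeas z z') (measurableSet_singleton true)) ?_ ?_ <;>
      exact Measurable.ite ((hDjmeas z' z) (measurableSet_singleton true)) (hYmeas _ _) (hYmeas _ _)
  have hFint : Integrable (fun ω => Y (Di z z' ω) (Dj z' z ω) ω) P := by
    refine Integrable.mono'
      (g := fun ω => |Y true true ω| + |Y true false ω| + |Y false true ω| + |Y false false ω|)
      ((((hYint _ _).abs.add (hYint _ _).abs).add (hYint _ _).abs).add (hYint _ _).abs)
      hFmeas.aestronglyMeasurable ?_
    filter_upwards with ω
    have h1 := abs_nonneg (Y true true ω); have h2 := abs_nonneg (Y true false ω)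
    have h3 := abs_nonneg (Y false true ω); have h4 := abs_nonneg (Y false false ω)
    rcases Di z z' ω <;> rcases Dj z' z ω <;> simp [Real.norm_eq_abs] <;> linarith
  have hae : ∀ᵐ ω ∂(P[|s]),
      Y (Di (Zi ω) (Zj ω) ω) (Dj (Zj ω) (Zi ω) ω) ω = Y (Di z z' ω) (Dj z' z ω) ω := by
    have h1 : ∀ᵐ ω ∂(P.restrict s),
        Y (Di (Zi ω) (Zj ω) ω) (Dj (Zj ω) (Zi ω) ω) ω = Y (Di z z' ω) (Dj z' z ω) ω := by
      filter_upwards [ae_restrict_mem hs] with ω hω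
      obtain ⟨h1, h2⟩ := hω
      simp only [Set.mem_setOf_eq] at h1 h2
      rw [h1, h2]
    exact Measure.ae_smul_measure h1 _
  rw [integral_congr_ae hae]
  set φ : ((Bool → Bool → ℝ) × (Bool → Bool → Bool) × (Bool → Bool → Bool)) → ℝ :=
    fun p => if p.2.1 z z' then (if p.2.2 z' z then p.1 true true else p.1 true false)
      else (if p.2.2 z' z then p.1 false true else p.1 false false) with hφ_def
  have hφ : Measurable φ := by
    have e1 : Measurable fun p : ((Bool → Bool → ℝ) × (Bool → Bool → Bool) × (Bool → Bool → Bool)) => p.2.1 z z' :=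
      (measurable_pi_apply z').comp ((measurable_pi_apply z).comp (measurable_fst.comp measurable_snd))
    have e2 : Measurable fun p : ((Bool → Bool → ℝ) × (Bool → Bool → Bool) × (Bool → Bool → Bool)) => p.2.2 z' z :=
      (measurable_pi_apply z).comp ((measurable_pi_apply z').comp (measurable_snd.comp measurable_snd))
    have e3 : ∀ d d' : Bool, Measurable fun p : ((Bool → Bool → ℝ) × (Bool → Bool → Bool) × (Bool → Bool → Bool)) => p.1 d d' :=
      fun d d' => (measurable_pi_apply d').comp ((measurable_pi_apply d).comp measurable_fst)
    refine Measurable.ite (e1 (measurableSet_singleton true)) ?_ ?_ <;>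
      exact Measurable.ite (e2 (measurableSet_singleton true)) (e3 _ _) (e3 _ _)
  set ψ : Bool × Bool → ℝ := fun q => if q.1 = z ∧ q.2 = z' then 1 else 0 with hψ_def
  have hψ : Measurable ψ := measurable_of_countable ψ
  have hψeq : (fun ω => ψ (Zi ω, Zj ω)) = s.indicator (fun _ => (1:ℝ)) := by
    funext ω
    by_cases h : ω ∈ s
    · have h1 : Zi ω = z := h.1
      have h2 : Zj ω = z' := h.2
      simp [hψ_def, h1, h2, Set.indicator_of_mem h]
    · have h' : ¬ (Zi ω = z ∧ Zj ω = z') := h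
      simp [hψ_def, h', Set.indicator_of_notMem h]
  have hψint : Integrable (fun ω => ψ (Zi ω, Zj ω)) P := by
    rw [hψeq]; exact (integrable_const (1:ℝ)).indicator hs
  have hindep : IndepFun (fun ω => Y (Di z z' ω) (Dj z' z ω) ω) (fun ω => ψ (Zi ω, Zj ω)) P := by
    have h := hIV.comp hφ hψ
    have heq : (φ ∘ (fun ω => ((fun d d' => Y d d' ω),
                 (fun z z' => Di z z' ω),
                 (fun z z' => Dj z z' ω))))
        = fun ω => Y (Di z z' ω) (Dj z' z ω) ω := by
      funext ω
      simp only [Function.comp, hφ_def]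
      cases hd : Di z z' ω <;> cases hd' : Dj z' z ω <;> simp [hd, hd']
    rw [heq] at h
    exact h
  have hmul := hindep.integral_mul_eq_mul_integral hFint.1 hψint.1
  have hψval : ∫ ω, ψ (Zi ω, Zj ω) ∂P = (P s).toReal := by
    rw [hψeq, integral_indicator hs]
    simp [Measure.real]
  have hsetint : ∫ ω in s, Y (Di z z' ω) (Dj z' z ω) ω ∂P
      = (∫ ω, Y (Di z z' ω) (Dj z' z ω) ω ∂P) * (P s).toReal := by
    rw [← integral_indicator hs, ← hψval, ← hmul]
    congr 1
    funext ω
    rw [← mul_ind' (fun ω => Y (Di z z' ω) (Dj z' z ω) ω) s, ← hψeq]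
    rfl
  show ∫ ω, Y (Di z z' ω) (Dj z' z ω) ω ∂((P s)⁻¹ • P.restrict s) = _
  rw [integral_smul_measure, hsetint, ENNReal.toReal_inv, smul_eq_mul]
  have hne : (P s).toReal ≠ 0 := ENNReal.toReal_ne_zero.mpr ⟨hs0, hstop⟩
  field_simp

theorem stmt_3
    {Ω : Type*} [MeasurableSpace Ω] (P : Measure Ω) [IsProbabilityMeasure P]
    (Y : Bool → Bool → Ω → ℝ) (Di Dj : Bool → Bool → Ω → Bool)
    (Zi Zj : Ω → Bool)
    (hYmeas : ∀ d d', Measurable (Y d d'))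
    (hYint : ∀ d d', Integrable (Y d d') P)
    (hDimeas : ∀ z z', Measurable (Di z z'))
    (hDjmeas : ∀ z z', Measurable (Dj z z'))
    (hZi : Measurable Zi) (hZj : Measurable Zj)
    (hpos : ∀ z z', 0 < P ({x | Zi x = z} ∩ {x | Zj x = z'}))
    (hIV : IndepFun
      (fun ω => ((fun d d' => Y d d' ω),
                 (fun z z' => Di z z' ω),
                 (fun z z' => Dj z z' ω)))
      (fun ω => (Zi ω, Zj ω)) P)
    (hmono : ∀ᵐ ω ∂P,
      (Di false false ω ≤ Di false true ω ∧ Di false true ω ≤ Di true false ω ∧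
        Di true false ω ≤ Di true true ω) ∧
      (Dj false false ω ≤ Dj false true ω ∧ Dj false true ω ≤ Dj true false ω ∧
        Dj true false ω ≤ Dj true true ω))
    :
    (∫ ω, (Y (Di (Zi ω) (Zj ω) ω) (Dj (Zj ω) (Zi ω) ω) ω) ∂(P[|({x | Zi x = false} ∩ {x | Zj x = true})])) - (∫ ω, (Y (Di (Zi ω) (Zj ω) ω) (Dj (Zj ω) (Zi ω) ω) ω) ∂(P[|({x | Zi x = false} ∩ {x | Zj x = false})]))
    = (∫ ω, (Y true false ω - Y false false ω) * Set.indicator ({x | Di false true x = true ∧ Di false false x = false} ∩ ({x | Dj true true x = true ∧ Dj true false x = false} ∪ {x | Dj true true x = false})) (fun _ => (1:ℝ)) ω ∂P)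
      + (∫ ω, (Y true true ω - Y false false ω) * Set.indicator ({x | Di false true x = true ∧ Di false false x = false} ∩ ({x | Dj false true x = true ∧ Dj false false x = false} ∪ {x | Dj true false x = true ∧ Dj false true x = false})) (fun _ => (1:ℝ)) ω ∂P)
      + (∫ ω, (Y true true ω - Y false true ω) * Set.indicator ({x | Di false true x = true ∧ Di false false x = false} ∩ {x | Dj false false x = true}) (fun _ => (1:ℝ)) ω ∂P)
      + (∫ ω, (Y false true ω - Y false false ω) * Set.indicator (({x | Di true false x = true ∧ Di false true x = false} ∪ {x | Di true true x = true ∧ Di true false x = false} ∪ {x | Di true true x = false}) ∩ ({x | Dj false true x = true ∧ Dj false false x = false} ∪ {x | Dj true false x = true ∧ Dj false true x = false})) (fun _ => (1:ℝ)) ω ∂P)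
      + (∫ ω, (Y true true ω - Y true false ω) * Set.indicator ({x | Di false false x = true} ∩ ({x | Dj false true x = true ∧ Dj false false x = false} ∪ {x | Dj true false x = true ∧ Dj false true x = false})) (fun _ => (1:ℝ)) ω ∂P) := by
  -- measurable sets
  have mDi : ∀ z z' (b : Bool), MeasurableSet {x | Di z z' x = b} :=
    fun z z' b => (hDimeas z z') (measurableSet_singleton b)
  have mDj : ∀ z z' (b : Bool), MeasurableSet {x | Dj z z' x = b} :=
    fun z z' b => (hDjmeas z z') (measurableSet_singleton b)
  have mand : ∀ {p q : Ω → Prop}, MeasurableSet {x | p x} → MeasurableSet {x | q x} →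
      MeasurableSet {x | p x ∧ q x} := fun hp hq => hp.inter hq
  set S1 : Set Ω := {x | Di false true x = true ∧ Di false false x = false} ∩ ({x | Dj true true x = true ∧ Dj true false x = false} ∪ {x | Dj true true x = false}) with hS1
  set S2 : Set Ω := {x | Di false true x = true ∧ Di false false x = false} ∩ ({x | Dj false true x = true ∧ Dj false false x = false} ∪ {x | Dj true false x = true ∧ Dj false true x = false}) with hS2
  set S3 : Set Ω := {x | Di false true x = true ∧ Di false false x = false} ∩ {x | Dj false false x = true} with hS3
  set S4 : Set Ω := ({x | Di true false x = true ∧ Di false true x = false} ∪ {x | Di true true x = true ∧ Di true false x = false} ∪ {x | Di true true x = false}) ∩ ({x | Dj false true x = true ∧ Dj false false x = false} ∪ {x | Dj true false x = true ∧ Dj false true x = false}) with hS4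
  set S5 : Set Ω := {x | Di false false x = true} ∩ ({x | Dj false true x = true ∧ Dj false false x = false} ∪ {x | Dj true false x = true ∧ Dj false true x = false}) with hS5
  have hmS1 : MeasurableSet S1 :=
    (mand (mDi _ _ _) (mDi _ _ _)).inter ((mand (mDj _ _ _) (mDj _ _ _)).union (mDj _ _ _))
  have hmS2 : MeasurableSet S2 :=
    (mand (mDi _ _ _) (mDi _ _ _)).inter ((mand (mDj _ _ _) (mDj _ _ _)).union (mand (mDj _ _ _) (mDj _ _ _)))
  have hmS3 : MeasurableSet S3 :=
    (mand (mDi _ _ _) (mDi _ _ _)).inter (mDj _ _ _)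
  have hmS4 : MeasurableSet S4 :=
    (((mand (mDi _ _ _) (mDi _ _ _)).union (mand (mDi _ _ _) (mDi _ _ _))).union (mDi _ _ _)).inter
      ((mand (mDj _ _ _) (mDj _ _ _)).union (mand (mDj _ _ _) (mDj _ _ _)))
  have hmS5 : MeasurableSet S5 :=
    (mDi _ _ _).inter ((mand (mDj _ _ _) (mDj _ _ _)).union (mand (mDj _ _ _) (mDj _ _ _)))
  -- integrability of each term
  have hint : ∀ (a b c d : Bool) (S : Set Ω), MeasurableSet S →
      Integrable (fun ω => (Y a b ω - Y c d ω) * S.indicator (fun _ => (1:ℝ)) ω) P := by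
    intro a b c d S hS
    rw [mul_ind' (fun ω => Y a b ω - Y c d ω) S]
    exact ((hYint a b).sub (hYint c d)).indicator hS
  -- counterfactual observed outcomes
  have hFeq : ∀ z z', (fun ω => Y (Di z z' ω) (Dj z' z ω) ω)
      = fun ω => if Di z z' ω then (if Dj z' z ω then Y true true ω else Y true false ω)
          else (if Dj z' z ω then Y false true ω else Y false false ω) := by
    intro z z'; funext ω; cases Di z z' ω <;> cases Dj z' z ω <;> rfl
  have hFmeas : ∀ z z', Measurable (fun ω => Y (Di z z' ω) (Dj z' z ω) ω) := by
    intro z z'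
    rw [hFeq]
    refine Measurable.ite ((hDimeas z z') (measurableSet_singleton true)) ?_ ?_ <;>
      exact Measurable.ite ((hDjmeas z' z) (measurableSet_singleton true)) (hYmeas _ _) (hYmeas _ _)
  have hFint : ∀ z z', Integrable (fun ω => Y (Di z z' ω) (Dj z' z ω) ω) P := by
    intro z z'
    refine Integrable.mono'
      (g := fun ω => |Y true true ω| + |Y true false ω| + |Y false true ω| + |Y false false ω|)
      ((((hYint _ _).abs.add (hYint _ _).abs).add (hYint _ _).abs).add (hYint _ _).abs)
      (hFmeas z z').aestronglyMeasurable ?_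
    filter_upwards with ω
    have h1 := abs_nonneg (Y true true ω); have h2 := abs_nonneg (Y true false ω)
    have h3 := abs_nonneg (Y false true ω); have h4 := abs_nonneg (Y false false ω)
    rcases Di z z' ω <;> rcases Dj z' z ω <;> simp [Real.norm_eq_abs] <;> linarith
  set F1 : Ω → ℝ := fun ω => (Y true false ω - Y false false ω) * S1.indicator (fun _ => (1:ℝ)) ω with hF1
  set F2 : Ω → ℝ := fun ω => (Y true true ω - Y false false ω) * S2.indicator (fun _ => (1:ℝ)) ω with hF2
  set F3 : Ω → ℝ := fun ω => (Y true true ω - Y false true ω) * S3.indicator (fun _ => (1:ℝ)) ω with hF3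
  set F4 : Ω → ℝ := fun ω => (Y false true ω - Y false false ω) * S4.indicator (fun _ => (1:ℝ)) ω with hF4
  set F5 : Ω → ℝ := fun ω => (Y true true ω - Y true false ω) * S5.indicator (fun _ => (1:ℝ)) ω with hF5
  have i1 : Integrable F1 P := by rw [hF1]; exact hint _ _ _ _ S1 hmS1
  have i2 : Integrable F2 P := by rw [hF2]; exact hint _ _ _ _ S2 hmS2
  have i3 : Integrable F3 P := by rw [hF3]; exact hint _ _ _ _ S3 hmS3
  have i4 : Integrable F4 P := by rw [hF4]; exact hint _ _ _ _ S4 hmS4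
  have i5 : Integrable F5 P := by rw [hF5]; exact hint _ _ _ _ S5 hmS5
  rw [key_cond' P Y Di Dj Zi Zj hYmeas hYint hDimeas hDjmeas hZi hZj hpos hIV false true,
    key_cond' P Y Di Dj Zi Zj hYmeas hYint hDimeas hDjmeas hZi hZj hpos hIV false false]
  rw [← integral_sub (hFint false true) (hFint false false)]
  have hae : ∀ᵐ ω ∂P,
      Y (Di false true ω) (Dj true false ω) ω - Y (Di false false ω) (Dj false false ω) ω
      = F1 ω + (F2 ω + (F3 ω + (F4 ω + F5 ω))) := by
    filter_upwards [hmono] with ω hm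
    obtain ⟨⟨hi1, hi2, hi3⟩, hj1, hj2, hj3⟩ := hm
    exact ptwise' Di Dj Y ω hi1 hi2 hi3 hj1 hj2 hj3
  rw [integral_congr_ae hae]
  rw [show (fun ω => F1 ω + (F2 ω + (F3 ω + (F4 ω + F5 ω))))
      = F1 + (F2 + (F3 + (F4 + F5))) from rfl,
    integral_add' i1 (i2.add (i3.add (i4.add i5))),
    integral_add' i2 (i3.add (i4.add i5)),
    integral_add' i3 (i4.add i5),
    integral_add' i4 i5]
  ring
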